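/- Let α, α₁, α₂ ∈ ℝ with α ≠ 0 and α·α₂ < 0. For i, j ∈ ℕ and t ∈ ℝ define I_{i,j}(t) = ∫₀^∞ ∫₀^∞ (x^i y^j e^{(i+j)αt} / ((x+y) e^{αt})) · exp((α₁/α)(x + y) e^{αt} + (α₂/(2α))(x² + y²) e^{2αt}) dx dy and β_i(t) = ∫₀^∞ x^i e^{iαt} exp((α₁/α) x e^{αt} + (α₂/(2α)) x² e^{2αt}) dx. Then all integrals converge, all functions are differentiable on ℝ, and for all i, j ∈ ℕ and t ∈ ℝ: I_{i,j}'(t) = α(i+j−1) I_{i,j}(t) + α₁(I_{i+1,j}(t) + I_{i,j+1}(t)) + α₂(I_{i+2,j}(t) + I_{i,j+2}(t)), β_i'(t) = iα β_i(t) + α₁ β_{i+1}(t) + α₂ β_{i+2}(t), I_{i,j}'(t) = −2α I_{i,j}(t), and β_i'(t) = −α β_i(t). -/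

import Mathlib

open MeasureTheory

/-- The deformed bimoments of symmetric Cauchy biorthogonal polynomials:
`I_{i,j}(t) = ∬_{(0,∞)²} (x^i y^j e^{(i+j)αt} / ((x+y) e^{αt}))
  exp((α₁/α)(x+y)e^{αt} + (α₂/(2α))(x²+y²)e^{2αt}) dx dy`. -/
noncomputable def cauchyBimoment (α α₁ α₂ : ℝ) (i j : ℕ) (t : ℝ) : ℝ :=
  ∫ p in (Set.Ioi (0 : ℝ)) ×ˢ (Set.Ioi (0 : ℝ)),
    p.1 ^ i * p.2 ^ j * Real.exp (((i : ℝ) + (j : ℝ)) * α * t)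
      / ((p.1 + p.2) * Real.exp (α * t))
      * Real.exp (α₁ / α * (p.1 + p.2) * Real.exp (α * t)
          + α₂ / (2 * α) * (p.1 ^ 2 + p.2 ^ 2) * Real.exp (2 * α * t))

/-- The deformed single moments:
`β_i(t) = ∫₀^∞ x^i e^{iαt} exp((α₁/α) x e^{αt} + (α₂/(2α)) x² e^{2αt}) dx`. -/
noncomputable def cauchySingleMoment (α α₁ α₂ : ℝ) (i : ℕ) (t : ℝ) : ℝ :=
  ∫ x in Set.Ioi (0 : ℝ),
    x ^ i * Real.exp ((i : ℝ) * α * t) *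
      Real.exp (α₁ / α * x * Real.exp (α * t) + α₂ / (2 * α) * x ^ 2 * Real.exp (2 * α * t))

open Set

lemma intOn_rpow_exp {c : ℝ} (hc : c < 0) (b : ℝ) {p : ℝ} (hp : -1 < p) :
    IntegrableOn (fun x : ℝ => x ^ p * Real.exp (b * x + c * x ^ 2)) (Set.Ioi 0) := by
  have h2 : (0:ℝ) < -c/2 := by linarith
  have base : Integrable (fun x : ℝ => x ^ p * Real.exp (-(-c/2) * x ^ 2)) :=
    integrable_rpow_mul_exp_neg_mul_sq h2 hp
  refine Integrable.mono' ((base.const_mul (Real.exp (b^2/(-(2*c))))).integrableOn) ?_ ?_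
  · exact Measurable.aestronglyMeasurable (by fun_prop)
  · rw [ae_restrict_iff' measurableSet_Ioi]
    filter_upwards with x hx
    have hxp : (0:ℝ) ≤ x ^ p := Real.rpow_nonneg hx.le p
    have key : b*x + c/2*x^2 ≤ b^2/(-(2*c)) := by
      rw [le_div_iff₀ (by linarith)]
      nlinarith [sq_nonneg (b + c*x)]
    have hA : Real.exp (b*x + c/2*x^2) ≤ Real.exp (b^2/(-(2*c))) := Real.exp_le_exp.2 key
    have hsplit : b*x + c*x^2 = (b*x + c/2*x^2) + (-(-c/2))*x^2 := by ring
    rw [Real.norm_eq_abs, abs_of_nonneg (mul_nonneg hxp (Real.exp_nonneg _)), hsplit, Real.exp_add]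
    calc x ^ p * (Real.exp (b*x + c/2*x^2) * Real.exp (-(-c/2)*x^2))
        = (x ^ p * Real.exp (-(-c/2)*x^2)) * Real.exp (b*x + c/2*x^2) := by ring
      _ ≤ (x ^ p * Real.exp (-(-c/2)*x^2)) * Real.exp (b^2/(-(2*c))) :=
          mul_le_mul_of_nonneg_left hA (mul_nonneg hxp (Real.exp_nonneg _))
      _ = Real.exp (b^2/(-(2*c))) * (x ^ p * Real.exp (-(-c/2)*x^2)) := by ring

lemma intOn_pow_exp {c : ℝ} (hc : c < 0) (b : ℝ) (k : ℕ) :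
    IntegrableOn (fun x : ℝ => x ^ k * Real.exp (b * x + c * x ^ 2)) (Set.Ioi 0) := by
  refine (intOn_rpow_exp hc b (p := (k:ℝ)) (by exact_mod_cast neg_one_lt_zero.trans_le (Nat.cast_nonneg k))).congr_fun ?_ measurableSet_Ioi
  intro x hx
  simp only []
  rw [Real.rpow_natCast]

lemma intOn_pow_sqrt_exp {c : ℝ} (hc : c < 0) (b : ℝ) (k : ℕ) :
    IntegrableOn (fun x : ℝ => x ^ k * (Real.sqrt x)⁻¹ * Real.exp (b * x + c * x ^ 2))
      (Set.Ioi 0) := by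
  refine (intOn_rpow_exp hc b (p := (k:ℝ) - 1/2) (by have := Nat.cast_nonneg (α := ℝ) k; linarith)).congr_fun ?_ measurableSet_Ioi
  intro x hx
  have hx0 : (0:ℝ) < x := hx
  simp only []
  rw [Real.rpow_sub hx0, Real.rpow_natCast, Real.sqrt_eq_rpow, div_eq_mul_inv]

lemma intOn_prod_mul {f g : ℝ → ℝ} (hf : IntegrableOn f (Set.Ioi 0)) (hg : IntegrableOn g (Set.Ioi 0)) :
    IntegrableOn (fun p : ℝ × ℝ => f p.1 * g p.2) ((Set.Ioi (0:ℝ)) ×ˢ (Set.Ioi (0:ℝ))) := by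
  rw [IntegrableOn, Measure.volume_eq_prod, ← Measure.prod_restrict]
  exact hf.mul_prod hg


noncomputable def sInt (α α₁ α₂ : ℝ) (i : ℕ) (t : ℝ) (x : ℝ) : ℝ :=
  x ^ i * Real.exp ((i : ℝ) * α * t) *
    Real.exp (α₁ / α * x * Real.exp (α * t) + α₂ / (2 * α) * x ^ 2 * Real.exp (2 * α * t))

section
variable {α α₁ α₂ : ℝ}

lemma hcneg (hα : α ≠ 0) (hαα₂ : α * α₂ < 0) : α₂ / (2 * α) < 0 := by
  have h2 : (0:ℝ) < 2 * α ^ 2 := by positivity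
  have : α₂ / (2 * α) = (α * α₂) / (2 * α ^ 2) := by
    field_simp
  rw [this]
  exact div_neg_of_neg_of_pos hαα₂ h2

lemma single_integrable (hα : α ≠ 0) (hαα₂ : α * α₂ < 0) (i : ℕ) (t : ℝ) :
    IntegrableOn (fun x => sInt α α₁ α₂ i t x) (Set.Ioi 0) := by
  have hc' : α₂ / (2*α) * Real.exp (α*t) ^ 2 < 0 :=
    mul_neg_of_neg_of_pos (hcneg hα hαα₂) (by positivity)
  have base := (intOn_pow_exp hc' (α₁/α * Real.exp (α*t)) i).const_mul (Real.exp ((i:ℝ)*α*t))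
  refine IntegrableOn.congr_fun base ?_ measurableSet_Ioi
  intro x hx
  simp only [sInt]
  have h2 : Real.exp (2*α*t) = Real.exp (α*t)^2 := by
    rw [show (2:ℝ)*α*t = α*t + α*t by ring, Real.exp_add, sq]
  rw [h2, show α₁/α*x*Real.exp (α*t) + α₂/(2*α)*x^2*Real.exp (α*t)^2
      = α₁/α*Real.exp (α*t)*x + α₂/(2*α)*Real.exp (α*t)^2*x^2 by ring]
  ring

lemma sInt_hasDerivAt (hα : α ≠ 0) (i : ℕ) (x u : ℝ) :
    HasDerivAt (fun v => sInt α α₁ α₂ i v x)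
      (((i:ℝ)*α + α₁*x*Real.exp (α*u) + α₂*x^2*Real.exp (2*α*u)) * sInt α α₁ α₂ i u x) u := by
  have h1 : HasDerivAt (fun v => (i:ℝ)*α*v) ((i:ℝ)*α) u := by
    simpa using (hasDerivAt_id u).const_mul ((i:ℝ)*α)
  have h2 : HasDerivAt (fun v => α*v) α u := by simpa using (hasDerivAt_id u).const_mul α
  have h3 : HasDerivAt (fun v => 2*α*v) (2*α) u := by simpa using (hasDerivAt_id u).const_mul (2*α)
  have harg : HasDerivAt (fun v => α₁/α * x * Real.exp (α*v) + α₂/(2*α) * x^2 * Real.exp (2*α*v))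
      (α₁/α*x*(Real.exp (α*u)*α) + α₂/(2*α)*x^2*(Real.exp (2*α*u)*(2*α))) u :=
    (h2.exp.const_mul (α₁/α*x)).add (h3.exp.const_mul (α₂/(2*α)*x^2))
  have hfull := (h1.exp.const_mul (x^i)).mul harg.exp
  simp only [sInt]
  refine hfull.congr_deriv ?_
  field_simp
  ring

lemma single_decomp (i : ℕ) (t x : ℝ) :
    ((i:ℝ)*α + α₁*x*Real.exp (α*t) + α₂*x^2*Real.exp (2*α*t)) * sInt α α₁ α₂ i t x
      = (i:ℝ)*α * sInt α α₁ α₂ i t x + α₁ * sInt α α₁ α₂ (i+1) t x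
        + α₂ * sInt α α₁ α₂ (i+2) t x := by
  simp only [sInt]
  push_cast
  rw [show ((i:ℝ)+1)*α*t = (i:ℝ)*α*t + α*t by ring,
    show ((i:ℝ)+2)*α*t = (i:ℝ)*α*t + α*t + α*t by ring,
    show (2:ℝ)*α*t = α*t + α*t by ring]
  simp only [Real.exp_add]
  ring

end

section
variable {α α₁ α₂ : ℝ}

lemma single_evolution (hα : α ≠ 0) (hαα₂ : α * α₂ < 0) (i : ℕ) (t : ℝ) :
    HasDerivAt (fun u => ∫ x in Ioi (0:ℝ), sInt α α₁ α₂ i u x)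
      ((i:ℝ)*α * (∫ x in Ioi (0:ℝ), sInt α α₁ α₂ i t x)
        + α₁ * (∫ x in Ioi (0:ℝ), sInt α α₁ α₂ (i+1) t x)
        + α₂ * (∫ x in Ioi (0:ℝ), sInt α α₁ α₂ (i+2) t x)) t := by
  set M := Real.exp (|α| * (|t|+1)) with hM
  set m := Real.exp (-(2* (|α| * (|t|+1)))) with hm
  have hMpos : 0 < M := Real.exp_pos _
  have hb := hcneg hα hαα₂
  have hcm : α₂/(2*α) * m < 0 := mul_neg_of_neg_of_pos hb (Real.exp_pos _)
  set bound : ℝ → ℝ := fun x =>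
    (|(i:ℝ)*α| + |α₁| *M*x + |α₂| *M^2*x^2)
      * (M^i * (x^i * Real.exp (|α₁/α| *M*x + (α₂/(2*α)*m)*x^2))) with hbd
  have bound_int : Integrable bound (volume.restrict (Ioi 0)) := by
    have e0 := (intOn_pow_exp hcm (|α₁/α| *M) i).const_mul (|(i:ℝ)*α| * M^i)
    have e1 := (intOn_pow_exp hcm (|α₁/α| *M) (i+1)).const_mul (|α₁| *M*M^i)
    have e2 := (intOn_pow_exp hcm (|α₁/α| *M) (i+2)).const_mul (|α₂| *M^2*M^i)
    refine ((e0.add e1).add e2).congr (Filter.Eventually.of_forall fun x => ?_)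
    simp only [Pi.add_apply, hbd]
    ring
  have key := hasDerivAt_integral_of_dominated_loc_of_deriv_le
    (F := fun u x => sInt α α₁ α₂ i u x)
    (F' := fun u x => ((i:ℝ)*α + α₁*x*Real.exp (α*u) + α₂*x^2*Real.exp (2*α*u))
      * sInt α α₁ α₂ i u x)
    (μ := volume.restrict (Ioi 0)) (x₀ := t) (bound := bound) (Metric.ball_mem_nhds t one_pos)
    (Filter.Eventually.of_forall fun u =>
      Continuous.aestronglyMeasurable (by unfold sInt; fun_prop))
    (single_integrable hα hαα₂ i t)
    (Continuous.aestronglyMeasurable (by unfold sInt; fun_prop))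
    ?_ bound_int
    (Filter.Eventually.of_forall fun x u _ => sInt_hasDerivAt hα i x u)
  · have hval : (∫ x in Ioi (0:ℝ), ((i:ℝ)*α + α₁*x*Real.exp (α*t) + α₂*x^2*Real.exp (2*α*t))
        * sInt α α₁ α₂ i t x)
        = (i:ℝ)*α * (∫ x in Ioi (0:ℝ), sInt α α₁ α₂ i t x)
          + α₁ * (∫ x in Ioi (0:ℝ), sInt α α₁ α₂ (i+1) t x)
          + α₂ * (∫ x in Ioi (0:ℝ), sInt α α₁ α₂ (i+2) t x) := by
      simp only [single_decomp]
      have hI0 : Integrable (fun x => (i:ℝ)*α * sInt α α₁ α₂ i t x) (volume.restrict (Ioi 0)) :=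
        (single_integrable hα hαα₂ i t).const_mul _
      have hI1 : Integrable (fun x => α₁ * sInt α α₁ α₂ (i+1) t x) (volume.restrict (Ioi 0)) :=
        (single_integrable hα hαα₂ (i+1) t).const_mul _
      have hI2 : Integrable (fun x => α₂ * sInt α α₁ α₂ (i+2) t x) (volume.restrict (Ioi 0)) :=
        (single_integrable hα hαα₂ (i+2) t).const_mul _
      have hI01 : Integrable (fun x => (i:ℝ)*α * sInt α α₁ α₂ i t x
          + α₁ * sInt α α₁ α₂ (i+1) t x) (volume.restrict (Ioi 0)) := hI0.add hI1
      rw [integral_add hI01 hI2, integral_add hI0 hI1,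
        MeasureTheory.integral_const_mul, MeasureTheory.integral_const_mul, MeasureTheory.integral_const_mul]
    rw [← hval]
    exact key.2
  · rw [ae_restrict_iff' measurableSet_Ioi]
    refine Filter.Eventually.of_forall fun x hx => ?_
    intro u hu
    have hx0 : (0:ℝ) < x := hx
    have hut : |u - t| < 1 := by rwa [Metric.mem_ball, Real.dist_eq] at hu
    have hu' : |u| ≤ |t| + 1 := by
      have := abs_sub_abs_le_abs_sub u t
      linarith
    have hαu : α*u ≤ |α| * (|t|+1) := le_trans (le_abs_self _)
      (by rw [abs_mul]; exact mul_le_mul_of_nonneg_left hu' (abs_nonneg α))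
    have hαu' : -(|α| * (|t|+1)) ≤ α*u := by
      have h1 : -(α*u) ≤ |α| * (|t|+1) := le_trans (neg_le_abs _)
        (by rw [abs_mul]; exact mul_le_mul_of_nonneg_left hu' (abs_nonneg α))
      linarith
    have hEu : Real.exp (α*u) ≤ M := Real.exp_le_exp.2 hαu
    have hEu2 : Real.exp (2*α*u) ≤ M^2 := by
      rw [hM, sq, ← Real.exp_add]
      exact Real.exp_le_exp.2 (by linarith)
    have hm2 : m ≤ Real.exp (2*α*u) := Real.exp_le_exp.2 (by linarith)
    have hEi : Real.exp ((i:ℝ)*α*u) ≤ M^i := by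
      rw [hM, ← Real.exp_nat_mul]
      refine Real.exp_le_exp.2 ?_
      calc (i:ℝ)*α*u = (i:ℝ)*(α*u) := by ring
        _ ≤ (i:ℝ)* (|α| * (|t|+1)) := mul_le_mul_of_nonneg_left hαu (Nat.cast_nonneg i)
    have hsnn : 0 ≤ sInt α α₁ α₂ i u x :=
      mul_nonneg (mul_nonneg (pow_nonneg hx0.le i) (Real.exp_nonneg _)) (Real.exp_nonneg _)
    have hW : sInt α α₁ α₂ i u x ≤ M^i * (x^i * Real.exp (|α₁/α| *M*x + (α₂/(2*α)*m)*x^2)) := by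
      simp only [sInt]
      have hexp : Real.exp (α₁/α*x*Real.exp (α*u) + α₂/(2*α)*x^2*Real.exp (2*α*u))
          ≤ Real.exp (|α₁/α| *M*x + (α₂/(2*α)*m)*x^2) := by
        refine Real.exp_le_exp.2 ?_
        nlinarith [mul_nonneg (mul_nonneg (sub_nonneg.2 (le_abs_self (α₁/α))) hx0.le)
            (Real.exp_pos (α*u)).le,
          mul_nonneg (mul_nonneg (abs_nonneg (α₁/α)) hx0.le) (sub_nonneg.2 hEu),
          mul_nonneg (mul_nonneg (neg_nonneg.2 hb.le) (sq_nonneg x)) (sub_nonneg.2 hm2)]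
      have h1 : x^i * Real.exp ((i:ℝ)*α*u) ≤ x^i * M^i :=
        mul_le_mul_of_nonneg_left hEi (pow_nonneg hx0.le i)
      refine le_trans (mul_le_mul h1 hexp (Real.exp_nonneg _) (by positivity)) (le_of_eq ?_)
      ring
    have hcoef : |(i:ℝ)*α + α₁*x*Real.exp (α*u) + α₂*x^2*Real.exp (2*α*u)|
        ≤ |(i:ℝ)*α| + |α₁| *M*x + |α₂| *M^2*x^2 := by
      refine le_trans (abs_add_le _ _) (add_le_add (le_trans (abs_add_le _ _)
        (add_le_add le_rfl ?_)) ?_)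
      · rw [abs_mul, abs_mul, abs_of_pos hx0, abs_of_pos (Real.exp_pos _)]
        nlinarith [mul_nonneg (mul_nonneg (abs_nonneg α₁) hx0.le) (sub_nonneg.2 hEu)]
      · rw [abs_mul, abs_mul, abs_of_nonneg (sq_nonneg x), abs_of_pos (Real.exp_pos _)]
        nlinarith [mul_nonneg (mul_nonneg (abs_nonneg α₂) (sq_nonneg x)) (sub_nonneg.2 hEu2)]
    have hfac : 0 ≤ |(i:ℝ)*α| + |α₁| *M*x + |α₂| *M^2*x^2 :=
      add_nonneg (add_nonneg (abs_nonneg _)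
        (mul_nonneg (mul_nonneg (abs_nonneg _) hMpos.le) hx0.le))
        (mul_nonneg (mul_nonneg (abs_nonneg _) (by positivity)) (sq_nonneg x))
    rw [Real.norm_eq_abs, abs_mul, abs_of_nonneg hsnn]
    exact mul_le_mul hcoef hW hsnn hfac

end

section
variable {α α₁ α₂ : ℝ}

lemma single_scale (i : ℕ) (t : ℝ) :
    (∫ x in Ioi (0:ℝ), sInt α α₁ α₂ i t x)
      = (Real.exp (α*t))⁻¹ * ∫ x in Ioi (0:ℝ), sInt α α₁ α₂ i 0 x := by
  have hE : 0 < Real.exp (α*t) := Real.exp_pos _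
  have hsub := integral_comp_mul_left_Ioi (fun y => sInt α α₁ α₂ i 0 y) 0 hE
  rw [mul_zero] at hsub
  have hpt : ∀ x : ℝ, sInt α α₁ α₂ i t x = sInt α α₁ α₂ i 0 (Real.exp (α*t) * x) := by
    intro x
    have hE2 : Real.exp (2*α*t) = Real.exp (α*t)*Real.exp (α*t) := by
      rw [show (2:ℝ)*α*t = α*t+α*t by ring, Real.exp_add]
    have hEi : Real.exp ((i:ℝ)*α*t) = Real.exp (α*t)^i := by
      rw [show (i:ℝ)*α*t = (i:ℝ)*(α*t) by ring, Real.exp_nat_mul]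
    simp only [sInt, mul_zero, zero_mul, Real.exp_zero, mul_one, one_mul, hE2, hEi]
    rw [show α₁/α*x*Real.exp (α*t) + α₂/(2*α)*x^2*(Real.exp (α*t)*Real.exp (α*t))
        = α₁/α*(Real.exp (α*t)*x) + α₂/(2*α)*(Real.exp (α*t)*x)^2 by ring]
    ring
  simp_rw [hpt]
  rw [hsub, smul_eq_mul]

lemma single_stationary (hα : α ≠ 0) (hαα₂ : α * α₂ < 0) (i : ℕ) (t : ℝ) :
    HasDerivAt (fun u => ∫ x in Ioi (0:ℝ), sInt α α₁ α₂ i u x)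
      (-α * ∫ x in Ioi (0:ℝ), sInt α α₁ α₂ i t x) t := by
  have hfun : (fun u => ∫ x in Ioi (0:ℝ), sInt α α₁ α₂ i u x)
      = fun u => Real.exp ((-α)*u) * ∫ x in Ioi (0:ℝ), sInt α α₁ α₂ i 0 x := by
    funext u
    rw [single_scale i u, ← Real.exp_neg, show -(α*u) = (-α)*u by ring]
  rw [hfun, single_scale i t]
  have h := (((hasDerivAt_id t).const_mul (-α)).exp).mul_const
    (∫ x in Ioi (0:ℝ), sInt α α₁ α₂ i 0 x)
  refine h.congr_deriv ?_
  rw [← Real.exp_neg, show -(α*t) = (-α)*t by ring]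
  simp only [id_eq]
  ring

end

noncomputable def bInt (α α₁ α₂ : ℝ) (i j : ℕ) (t : ℝ) (p : ℝ × ℝ) : ℝ :=
  p.1 ^ i * p.2 ^ j * Real.exp (((i : ℝ) + (j : ℝ)) * α * t)
    / ((p.1 + p.2) * Real.exp (α * t))
    * Real.exp (α₁ / α * (p.1 + p.2) * Real.exp (α * t)
        + α₂ / (2 * α) * (p.1 ^ 2 + p.2 ^ 2) * Real.exp (2 * α * t))

section
variable {α α₁ α₂ : ℝ}

lemma two_sqrt_le {x y : ℝ} (hx : 0 < x) (hy : 0 < y) :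
    2*(Real.sqrt x*Real.sqrt y) ≤ x+y := by
  nlinarith [sq_nonneg (Real.sqrt x - Real.sqrt y), Real.sq_sqrt hx.le, Real.sq_sqrt hy.le]

lemma bi_measurable (i j : ℕ) (u : ℝ) : Measurable (fun p => bInt α α₁ α₂ i j u p) := by
  unfold bInt
  fun_prop

lemma bi_integrable (hα : α ≠ 0) (hαα₂ : α * α₂ < 0) (i j : ℕ) (t : ℝ) :
    IntegrableOn (fun p => bInt α α₁ α₂ i j t p) ((Set.Ioi (0:ℝ)) ×ˢ (Set.Ioi (0:ℝ))) := by
  have hE : (0:ℝ) < Real.exp (α*t) := Real.exp_pos _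
  have hc' : α₂/(2*α) * Real.exp (α*t)^2 < 0 :=
    mul_neg_of_neg_of_pos (hcneg hα hαα₂) (by positivity)
  have maj := (intOn_prod_mul (intOn_pow_sqrt_exp hc' (α₁/α * Real.exp (α*t)) i)
      (intOn_pow_sqrt_exp hc' (α₁/α * Real.exp (α*t)) j)).const_mul
    (Real.exp (((i:ℝ)+(j:ℝ))*α*t)/(2*Real.exp (α*t)))
  refine Integrable.mono' maj ((bi_measurable i j t).aestronglyMeasurable) ?_
  rw [ae_restrict_iff' (measurableSet_Ioi.prod measurableSet_Ioi)]
  refine Filter.Eventually.of_forall fun p hp => ?_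
  have hx : (0:ℝ) < p.1 := hp.1
  have hy : (0:ℝ) < p.2 := hp.2
  have hsx : (0:ℝ) < Real.sqrt p.1 := Real.sqrt_pos.2 hx
  have hsy : (0:ℝ) < Real.sqrt p.2 := Real.sqrt_pos.2 hy
  have hE2 : Real.exp (2*α*t) = Real.exp (α*t)^2 := by
    rw [show (2:ℝ)*α*t = α*t+α*t by ring, Real.exp_add, sq]
  have hW : Real.exp (α₁/α*(p.1+p.2)*Real.exp (α*t)
        + α₂/(2*α)*(p.1^2+p.2^2)*Real.exp (2*α*t))
      = Real.exp (α₁/α*Real.exp (α*t)*p.1 + α₂/(2*α)*Real.exp (α*t)^2*p.1^2)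
        * Real.exp (α₁/α*Real.exp (α*t)*p.2 + α₂/(2*α)*Real.exp (α*t)^2*p.2^2) := by
    rw [hE2, show α₁/α*(p.1+p.2)*Real.exp (α*t) + α₂/(2*α)*(p.1^2+p.2^2)*Real.exp (α*t)^2
      = (α₁/α*Real.exp (α*t)*p.1 + α₂/(2*α)*Real.exp (α*t)^2*p.1^2)
        + (α₁/α*Real.exp (α*t)*p.2 + α₂/(2*α)*Real.exp (α*t)^2*p.2^2) by ring, Real.exp_add]
  have hbnn : 0 ≤ bInt α α₁ α₂ i j t p := by
    unfold bInt
    exact mul_nonneg (div_nonneg (mul_nonneg (mul_nonneg (pow_nonneg hx.le i)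
      (pow_nonneg hy.le j)) (Real.exp_nonneg _))
      (mul_nonneg (add_nonneg hx.le hy.le) (Real.exp_nonneg _))) (Real.exp_nonneg _)
  rw [Real.norm_eq_abs, abs_of_nonneg hbnn]
  have h2s : 2*(Real.sqrt p.1*Real.sqrt p.2) ≤ p.1+p.2 := two_sqrt_le hx hy
  have hNnn : 0 ≤ p.1^i*p.2^j*Real.exp (((i:ℝ)+(j:ℝ))*α*t) :=
    mul_nonneg (mul_nonneg (pow_nonneg hx.le i) (pow_nonneg hy.le j)) (Real.exp_nonneg _)
  have key : p.1^i*p.2^j*Real.exp (((i:ℝ)+(j:ℝ))*α*t)/((p.1+p.2)*Real.exp (α*t))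
      ≤ Real.exp (((i:ℝ)+(j:ℝ))*α*t)/(2*Real.exp (α*t))
        * (p.1^i*(Real.sqrt p.1)⁻¹ * (p.2^j*(Real.sqrt p.2)⁻¹)) := by
    rw [← div_div]
    have step : p.1^i*p.2^j*Real.exp (((i:ℝ)+(j:ℝ))*α*t)/(p.1+p.2)
        ≤ p.1^i*p.2^j*Real.exp (((i:ℝ)+(j:ℝ))*α*t)/(2*(Real.sqrt p.1*Real.sqrt p.2)) :=
      div_le_div_of_nonneg_left hNnn (by positivity) h2s
    refine le_trans ((div_le_div_iff_of_pos_right hE).2 step) (le_of_eq ?_)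
    ring
  calc bInt α α₁ α₂ i j t p
      = p.1^i*p.2^j*Real.exp (((i:ℝ)+(j:ℝ))*α*t)/((p.1+p.2)*Real.exp (α*t))
        * (Real.exp (α₁/α*Real.exp (α*t)*p.1 + α₂/(2*α)*Real.exp (α*t)^2*p.1^2)
          * Real.exp (α₁/α*Real.exp (α*t)*p.2 + α₂/(2*α)*Real.exp (α*t)^2*p.2^2)) := by
        unfold bInt; rw [hW]
    _ ≤ (Real.exp (((i:ℝ)+(j:ℝ))*α*t)/(2*Real.exp (α*t))
          * (p.1^i*(Real.sqrt p.1)⁻¹ * (p.2^j*(Real.sqrt p.2)⁻¹)))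
        * (Real.exp (α₁/α*Real.exp (α*t)*p.1 + α₂/(2*α)*Real.exp (α*t)^2*p.1^2)
          * Real.exp (α₁/α*Real.exp (α*t)*p.2 + α₂/(2*α)*Real.exp (α*t)^2*p.2^2)) :=
        mul_le_mul_of_nonneg_right key (mul_nonneg (Real.exp_nonneg _) (Real.exp_nonneg _))
    _ = Real.exp (((i:ℝ)+(j:ℝ))*α*t)/(2*Real.exp (α*t))
        * (p.1^i*(Real.sqrt p.1)⁻¹
            * Real.exp (α₁/α*Real.exp (α*t)*p.1 + α₂/(2*α)*Real.exp (α*t)^2*p.1^2)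
          * (p.2^j*(Real.sqrt p.2)⁻¹
            * Real.exp (α₁/α*Real.exp (α*t)*p.2 + α₂/(2*α)*Real.exp (α*t)^2*p.2^2))) := by
        ring
end

section
variable {α α₁ α₂ : ℝ}

lemma bInt_eq (i j : ℕ) (p : ℝ × ℝ) (v : ℝ) :
    bInt α α₁ α₂ i j v p = p.1^i*p.2^j/(p.1+p.2)
      * (Real.exp (((i:ℝ)+(j:ℝ)-1)*α*v)
        * Real.exp (α₁/α*(p.1+p.2)*Real.exp (α*v)
            + α₂/(2*α)*(p.1^2+p.2^2)*Real.exp (2*α*v))) := by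
  unfold bInt
  rw [mul_div_mul_comm, ← Real.exp_sub,
    show ((i:ℝ)+(j:ℝ))*α*v - α*v = ((i:ℝ)+(j:ℝ)-1)*α*v by ring]
  ring

lemma bInt_hasDerivAt (hα : α ≠ 0) (i j : ℕ) (p : ℝ × ℝ) (u : ℝ) :
    HasDerivAt (fun v => bInt α α₁ α₂ i j v p)
      ((((i:ℝ)+(j:ℝ)-1)*α + α₁*(p.1+p.2)*Real.exp (α*u)
          + α₂*(p.1^2+p.2^2)*Real.exp (2*α*u)) * bInt α α₁ α₂ i j u p) u := by
  simp only [bInt_eq]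
  have h1 : HasDerivAt (fun v => ((i:ℝ)+(j:ℝ)-1)*α*v) (((i:ℝ)+(j:ℝ)-1)*α) u := by
    simpa using (hasDerivAt_id u).const_mul (((i:ℝ)+(j:ℝ)-1)*α)
  have h2 : HasDerivAt (fun v => α*v) α u := by simpa using (hasDerivAt_id u).const_mul α
  have h3 : HasDerivAt (fun v => 2*α*v) (2*α) u := by simpa using (hasDerivAt_id u).const_mul (2*α)
  have harg : HasDerivAt (fun v => α₁/α*(p.1+p.2)*Real.exp (α*v)
        + α₂/(2*α)*(p.1^2+p.2^2)*Real.exp (2*α*v))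
      (α₁/α*(p.1+p.2)*(Real.exp (α*u)*α)
        + α₂/(2*α)*(p.1^2+p.2^2)*(Real.exp (2*α*u)*(2*α))) u :=
    (h2.exp.const_mul (α₁/α*(p.1+p.2))).add (h3.exp.const_mul (α₂/(2*α)*(p.1^2+p.2^2)))
  have hfull := (h1.exp.mul harg.exp).const_mul (p.1^i*p.2^j/(p.1+p.2))
  have c1 : α₁ / α * (p.1+p.2) * (Real.exp (α*u) * α) = α₁ * (p.1+p.2) * Real.exp (α*u) := by
    field_simp
  have c2 : α₂ / (2*α) * (p.1^2+p.2^2) * (Real.exp (2*α*u) * (2*α))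
      = α₂ * (p.1^2+p.2^2) * Real.exp (2*α*u) := by
    field_simp
  rw [c1, c2] at hfull
  refine hfull.congr_deriv ?_
  ring

lemma bi_decomp (i j : ℕ) (t : ℝ) (p : ℝ × ℝ) :
    ((((i:ℝ)+(j:ℝ)-1)*α + α₁*(p.1+p.2)*Real.exp (α*t)
        + α₂*(p.1^2+p.2^2)*Real.exp (2*α*t)) * bInt α α₁ α₂ i j t p)
      = α*((i:ℝ)+(j:ℝ)-1) * bInt α α₁ α₂ i j t p
        + α₁ * (bInt α α₁ α₂ (i+1) j t p + bInt α α₁ α₂ i (j+1) t p)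
        + α₂ * (bInt α α₁ α₂ (i+2) j t p + bInt α α₁ α₂ i (j+2) t p) := by
  simp only [bInt]
  push_cast
  rw [show ((i:ℝ)+1+(j:ℝ))*α*t = ((i:ℝ)+(j:ℝ))*α*t + α*t by ring,
    show ((i:ℝ)+((j:ℝ)+1))*α*t = ((i:ℝ)+(j:ℝ))*α*t + α*t by ring,
    show ((i:ℝ)+2+(j:ℝ))*α*t = ((i:ℝ)+(j:ℝ))*α*t + (α*t + α*t) by ring,
    show ((i:ℝ)+((j:ℝ)+2))*α*t = ((i:ℝ)+(j:ℝ))*α*t + (α*t + α*t) by ring,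
    show (2:ℝ)*α*t = α*t + α*t by ring]
  simp only [Real.exp_add]
  ring

end

section
variable {α α₁ α₂ : ℝ}

set_option maxHeartbeats 1000000 in
lemma bi_evolution (hα : α ≠ 0) (hαα₂ : α * α₂ < 0) (i j : ℕ) (t : ℝ) :
    HasDerivAt (fun u => ∫ p in (Set.Ioi (0:ℝ)) ×ˢ (Set.Ioi (0:ℝ)), bInt α α₁ α₂ i j u p)
      (α * ((i:ℝ) + (j:ℝ) - 1) * (∫ p in (Set.Ioi (0:ℝ)) ×ˢ (Set.Ioi (0:ℝ)), bInt α α₁ α₂ i j t p)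
        + α₁ * ((∫ p in (Set.Ioi (0:ℝ)) ×ˢ (Set.Ioi (0:ℝ)), bInt α α₁ α₂ (i+1) j t p)
          + (∫ p in (Set.Ioi (0:ℝ)) ×ˢ (Set.Ioi (0:ℝ)), bInt α α₁ α₂ i (j+1) t p))
        + α₂ * ((∫ p in (Set.Ioi (0:ℝ)) ×ˢ (Set.Ioi (0:ℝ)), bInt α α₁ α₂ (i+2) j t p)
          + (∫ p in (Set.Ioi (0:ℝ)) ×ˢ (Set.Ioi (0:ℝ)), bInt α α₁ α₂ i (j+2) t p))) t := by
  set M := Real.exp (|α| * (|t| + 1)) with hM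
  set m := Real.exp (-(2 * (|α| * (|t| + 1)))) with hm
  set Q := Real.exp (((i:ℝ)+(j:ℝ)+1) * (|α| * (|t| + 1))) with hQ
  have hMpos : 0 < M := Real.exp_pos _
  have hQpos : 0 < Q := Real.exp_pos _
  have hb := hcneg hα hαα₂
  have hcm : α₂/(2*α) * m < 0 := mul_neg_of_neg_of_pos hb (Real.exp_pos _)
  set Φ : ℕ → ℝ → ℝ := fun k x => x^k * (Real.sqrt x)⁻¹
    * Real.exp ((|α₁/α| * M) * x + (α₂/(2*α)*m) * x^2) with hΦ
  have hΦint : ∀ k : ℕ, IntegrableOn (Φ k) (Set.Ioi 0) := fun k =>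
    intOn_pow_sqrt_exp hcm (|α₁/α| * M) k
  set bound : ℝ × ℝ → ℝ := fun p =>
    (|((i:ℝ)+(j:ℝ)-1)*α| + |α₁| * M * (p.1+p.2) + |α₂| * M^2 * (p.1^2+p.2^2))
      * (Q/2 * (Φ i p.1 * Φ j p.2)) with hbd
  have bound_int : Integrable bound
      (volume.restrict ((Set.Ioi (0:ℝ)) ×ˢ (Set.Ioi (0:ℝ)))) := by
    have e00 := (intOn_prod_mul (hΦint i) (hΦint j)).const_mul (|((i:ℝ)+(j:ℝ)-1)*α| * (Q/2))
    have e10 := (intOn_prod_mul (hΦint (i+1)) (hΦint j)).const_mul (|α₁| * M * (Q/2))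
    have e01 := (intOn_prod_mul (hΦint i) (hΦint (j+1))).const_mul (|α₁| * M * (Q/2))
    have e20 := (intOn_prod_mul (hΦint (i+2)) (hΦint j)).const_mul (|α₂| * M^2 * (Q/2))
    have e02 := (intOn_prod_mul (hΦint i) (hΦint (j+2))).const_mul (|α₂| * M^2 * (Q/2))
    refine ((((e00.add e10).add e01).add e20).add e02).congr
      (Filter.Eventually.of_forall fun p => ?_)
    simp only [Pi.add_apply, hbd, hΦ]
    ring
  have key := hasDerivAt_integral_of_dominated_loc_of_deriv_le
    (F := fun u p => bInt α α₁ α₂ i j u p)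
    (F' := fun u p => ((((i:ℝ)+(j:ℝ)-1)*α + α₁*(p.1+p.2)*Real.exp (α*u)
        + α₂*(p.1^2+p.2^2)*Real.exp (2*α*u)) * bInt α α₁ α₂ i j u p))
    (μ := volume.restrict ((Set.Ioi (0:ℝ)) ×ˢ (Set.Ioi (0:ℝ)))) (x₀ := t) (bound := bound)
    (Metric.ball_mem_nhds t one_pos)
    (Filter.Eventually.of_forall fun u => (bi_measurable i j u).aestronglyMeasurable)
    (bi_integrable hα hαα₂ i j t)
    (Measurable.aestronglyMeasurable (by
      have := bi_measurable (α := α) (α₁ := α₁) (α₂ := α₂) i j t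
      fun_prop))
    ?_ bound_int
    (Filter.Eventually.of_forall fun p u _ => bInt_hasDerivAt hα i j p u)
  · have hI0 : Integrable (fun p : ℝ × ℝ => α*((i:ℝ)+(j:ℝ)-1) * bInt α α₁ α₂ i j t p)
        (volume.restrict ((Set.Ioi (0:ℝ)) ×ˢ (Set.Ioi (0:ℝ)))) :=
      (bi_integrable hα hαα₂ i j t).const_mul _
    have hI1 : Integrable (fun p : ℝ × ℝ => bInt α α₁ α₂ (i+1) j t p
        + bInt α α₁ α₂ i (j+1) t p)
        (volume.restrict ((Set.Ioi (0:ℝ)) ×ˢ (Set.Ioi (0:ℝ)))) :=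
      (bi_integrable hα hαα₂ (i+1) j t).add (bi_integrable hα hαα₂ i (j+1) t)
    have hI2 : Integrable (fun p : ℝ × ℝ => bInt α α₁ α₂ (i+2) j t p
        + bInt α α₁ α₂ i (j+2) t p)
        (volume.restrict ((Set.Ioi (0:ℝ)) ×ˢ (Set.Ioi (0:ℝ)))) :=
      (bi_integrable hα hαα₂ (i+2) j t).add (bi_integrable hα hαα₂ i (j+2) t)
    have hval : (∫ p in (Set.Ioi (0:ℝ)) ×ˢ (Set.Ioi (0:ℝ)),
          ((((i:ℝ)+(j:ℝ)-1)*α + α₁*(p.1+p.2)*Real.exp (α*t)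
            + α₂*(p.1^2+p.2^2)*Real.exp (2*α*t)) * bInt α α₁ α₂ i j t p))
        = α * ((i:ℝ)+(j:ℝ)-1) * (∫ p in (Set.Ioi (0:ℝ)) ×ˢ (Set.Ioi (0:ℝ)), bInt α α₁ α₂ i j t p)
          + α₁ * ((∫ p in (Set.Ioi (0:ℝ)) ×ˢ (Set.Ioi (0:ℝ)), bInt α α₁ α₂ (i+1) j t p)
            + (∫ p in (Set.Ioi (0:ℝ)) ×ˢ (Set.Ioi (0:ℝ)), bInt α α₁ α₂ i (j+1) t p))
          + α₂ * ((∫ p in (Set.Ioi (0:ℝ)) ×ˢ (Set.Ioi (0:ℝ)), bInt α α₁ α₂ (i+2) j t p)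
            + (∫ p in (Set.Ioi (0:ℝ)) ×ˢ (Set.Ioi (0:ℝ)), bInt α α₁ α₂ i (j+2) t p)) := by
      simp only [bi_decomp]
      have hI1' : Integrable (fun p : ℝ × ℝ => α₁ * (bInt α α₁ α₂ (i+1) j t p
          + bInt α α₁ α₂ i (j+1) t p))
          (volume.restrict ((Set.Ioi (0:ℝ)) ×ˢ (Set.Ioi (0:ℝ)))) := hI1.const_mul α₁
      have hI2' : Integrable (fun p : ℝ × ℝ => α₂ * (bInt α α₁ α₂ (i+2) j t p
          + bInt α α₁ α₂ i (j+2) t p))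
          (volume.restrict ((Set.Ioi (0:ℝ)) ×ˢ (Set.Ioi (0:ℝ)))) := hI2.const_mul α₂
      have hI01 : Integrable (fun p : ℝ × ℝ => α*((i:ℝ)+(j:ℝ)-1) * bInt α α₁ α₂ i j t p
          + α₁ * (bInt α α₁ α₂ (i+1) j t p + bInt α α₁ α₂ i (j+1) t p))
          (volume.restrict ((Set.Ioi (0:ℝ)) ×ˢ (Set.Ioi (0:ℝ)))) := hI0.add hI1'
      rw [integral_add hI01 hI2',
        integral_add hI0 hI1',
        MeasureTheory.integral_const_mul, MeasureTheory.integral_const_mul,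
        MeasureTheory.integral_const_mul,
        integral_add (bi_integrable hα hαα₂ (i+1) j t) (bi_integrable hα hαα₂ i (j+1) t),
        integral_add (bi_integrable hα hαα₂ (i+2) j t) (bi_integrable hα hαα₂ i (j+2) t)]
    rw [← hval]
    exact key.2
  · rw [ae_restrict_iff' (measurableSet_Ioi.prod measurableSet_Ioi)]
    refine Filter.Eventually.of_forall fun p hp => ?_
    intro u hu
    have hx : (0:ℝ) < p.1 := hp.1
    have hy : (0:ℝ) < p.2 := hp.2
    have hsx : (0:ℝ) < Real.sqrt p.1 := Real.sqrt_pos.2 hx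
    have hsy : (0:ℝ) < Real.sqrt p.2 := Real.sqrt_pos.2 hy
    have hut : |u - t| < 1 := by rwa [Metric.mem_ball, Real.dist_eq] at hu
    have hu' : |u| ≤ |t| + 1 := by
      have := abs_sub_abs_le_abs_sub u t
      linarith
    have hαu : α*u ≤ |α| * (|t|+1) := le_trans (le_abs_self _)
      (by rw [abs_mul]; exact mul_le_mul_of_nonneg_left hu' (abs_nonneg α))
    have hαu' : -(|α| * (|t|+1)) ≤ α*u := by
      have h1 : -(α*u) ≤ |α| * (|t|+1) := le_trans (neg_le_abs _)
        (by rw [abs_mul]; exact mul_le_mul_of_nonneg_left hu' (abs_nonneg α))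
      linarith
    have hEu : Real.exp (α*u) ≤ M := Real.exp_le_exp.2 hαu
    have hEu2 : Real.exp (2*α*u) ≤ M^2 := by
      rw [hM, sq, ← Real.exp_add]
      exact Real.exp_le_exp.2 (by linarith)
    have hm2 : m ≤ Real.exp (2*α*u) := Real.exp_le_exp.2 (by linarith)
    have habs : |(i:ℝ)+(j:ℝ)-1| ≤ (i:ℝ)+(j:ℝ)+1 := by
      rw [abs_le]
      constructor <;> nlinarith [Nat.cast_nonneg (α := ℝ) i, Nat.cast_nonneg (α := ℝ) j]
    have hEQ : Real.exp (((i:ℝ)+(j:ℝ)-1)*α*u) ≤ Q := by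
      refine Real.exp_le_exp.2 (le_trans (le_abs_self _) ?_)
      rw [abs_mul, abs_mul]
      calc |(i:ℝ)+(j:ℝ)-1| * |α| * |u|
          ≤ ((i:ℝ)+(j:ℝ)+1) * |α| * |u| :=
            mul_le_mul_of_nonneg_right
              (mul_le_mul_of_nonneg_right habs (abs_nonneg α)) (abs_nonneg u)
        _ ≤ ((i:ℝ)+(j:ℝ)+1) * |α| * (|t|+1) :=
            mul_le_mul_of_nonneg_left hu' (by positivity)
        _ = ((i:ℝ)+(j:ℝ)+1) * (|α| * (|t|+1)) := by ring
    have hbnn : 0 ≤ bInt α α₁ α₂ i j u p := by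
      unfold bInt
      exact mul_nonneg (div_nonneg (mul_nonneg (mul_nonneg (pow_nonneg hx.le i)
        (pow_nonneg hy.le j)) (Real.exp_nonneg _))
        (mul_nonneg (add_nonneg hx.le hy.le) (Real.exp_nonneg _))) (Real.exp_nonneg _)
    have hWle : Real.exp (α₁/α*(p.1+p.2)*Real.exp (α*u)
          + α₂/(2*α)*(p.1^2+p.2^2)*Real.exp (2*α*u))
        ≤ Real.exp ((|α₁/α| * M) * p.1 + (α₂/(2*α)*m) * p.1^2)
          * Real.exp ((|α₁/α| * M) * p.2 + (α₂/(2*α)*m) * p.2^2) := by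
      rw [← Real.exp_add]
      refine Real.exp_le_exp.2 ?_
      have hs : (0:ℝ) < p.1 + p.2 := by linarith
      nlinarith [mul_nonneg (mul_nonneg (sub_nonneg.2 (le_abs_self (α₁/α))) hs.le)
          (Real.exp_pos (α*u)).le,
        mul_nonneg (mul_nonneg (abs_nonneg (α₁/α)) hs.le) (sub_nonneg.2 hEu),
        mul_nonneg (mul_nonneg (neg_nonneg.2 hb.le)
          (add_nonneg (sq_nonneg p.1) (sq_nonneg p.2))) (sub_nonneg.2 hm2)]
    have h2s : 2*(Real.sqrt p.1*Real.sqrt p.2) ≤ p.1+p.2 := two_sqrt_le hx hy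
    have hNnn : 0 ≤ p.1^i*p.2^j :=
      mul_nonneg (pow_nonneg hx.le i) (pow_nonneg hy.le j)
    have hFle : bInt α α₁ α₂ i j u p ≤ Q/2 * (Φ i p.1 * Φ j p.2) := by
      rw [bInt_eq]
      have step1 : p.1^i*p.2^j/(p.1+p.2) ≤ p.1^i*p.2^j/(2*(Real.sqrt p.1*Real.sqrt p.2)) :=
        div_le_div_of_nonneg_left hNnn (by positivity) h2s
      have step2 : Real.exp (((i:ℝ)+(j:ℝ)-1)*α*u)
            * Real.exp (α₁/α*(p.1+p.2)*Real.exp (α*u)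
              + α₂/(2*α)*(p.1^2+p.2^2)*Real.exp (2*α*u))
          ≤ Q * (Real.exp ((|α₁/α| * M) * p.1 + (α₂/(2*α)*m) * p.1^2)
            * Real.exp ((|α₁/α| * M) * p.2 + (α₂/(2*α)*m) * p.2^2)) :=
        mul_le_mul hEQ hWle (Real.exp_nonneg _) hQpos.le
      calc p.1^i*p.2^j/(p.1+p.2) * (Real.exp (((i:ℝ)+(j:ℝ)-1)*α*u)
            * Real.exp (α₁/α*(p.1+p.2)*Real.exp (α*u)
              + α₂/(2*α)*(p.1^2+p.2^2)*Real.exp (2*α*u)))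
          ≤ p.1^i*p.2^j/(2*(Real.sqrt p.1*Real.sqrt p.2))
            * (Q * (Real.exp ((|α₁/α| * M) * p.1 + (α₂/(2*α)*m) * p.1^2)
              * Real.exp ((|α₁/α| * M) * p.2 + (α₂/(2*α)*m) * p.2^2))) :=
            mul_le_mul step1 step2
              (mul_nonneg (Real.exp_nonneg _) (Real.exp_nonneg _))
              (by positivity)
        _ = Q/2 * (Φ i p.1 * Φ j p.2) := by
            simp only [hΦ]
            ring
    have hcoef : |((i:ℝ)+(j:ℝ)-1)*α + α₁*(p.1+p.2)*Real.exp (α*u)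
          + α₂*(p.1^2+p.2^2)*Real.exp (2*α*u)|
        ≤ |((i:ℝ)+(j:ℝ)-1)*α| + |α₁| * M * (p.1+p.2) + |α₂| * M^2 * (p.1^2+p.2^2) := by
      refine le_trans (abs_add_le _ _) (add_le_add (le_trans (abs_add_le _ _)
        (add_le_add le_rfl ?_)) ?_)
      · rw [abs_mul, abs_mul, abs_of_pos (by linarith : (0:ℝ) < p.1+p.2),
          abs_of_pos (Real.exp_pos _)]
        nlinarith [mul_nonneg (mul_nonneg (abs_nonneg α₁) (by linarith : (0:ℝ) ≤ p.1+p.2))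
          (sub_nonneg.2 hEu)]
      · rw [abs_mul, abs_mul,
          abs_of_nonneg (add_nonneg (sq_nonneg p.1) (sq_nonneg p.2)),
          abs_of_pos (Real.exp_pos _)]
        nlinarith [mul_nonneg (mul_nonneg (abs_nonneg α₂)
          (add_nonneg (sq_nonneg p.1) (sq_nonneg p.2))) (sub_nonneg.2 hEu2)]
    have hfac : 0 ≤ |((i:ℝ)+(j:ℝ)-1)*α| + |α₁| * M * (p.1+p.2) + |α₂| * M^2 * (p.1^2+p.2^2) :=
      add_nonneg (add_nonneg (abs_nonneg _)
        (mul_nonneg (mul_nonneg (abs_nonneg _) hMpos.le) (by linarith)))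
        (mul_nonneg (mul_nonneg (abs_nonneg _) (by positivity))
          (add_nonneg (sq_nonneg p.1) (sq_nonneg p.2)))
    rw [Real.norm_eq_abs, abs_mul, abs_of_nonneg hbnn]
    exact mul_le_mul hcoef hFle hbnn hfac

end

lemma my_prod_int {f : ℝ × ℝ → ℝ} (hf : IntegrableOn f ((Set.Ioi (0:ℝ)) ×ˢ (Set.Ioi (0:ℝ)))) :
    ∫ z in (Set.Ioi (0:ℝ)) ×ˢ (Set.Ioi (0:ℝ)), f z
      = ∫ x in Set.Ioi (0:ℝ), ∫ y in Set.Ioi (0:ℝ), f (x, y) :=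
  MeasureTheory.setIntegral_prod f hf

section
variable {α α₁ α₂ : ℝ}

lemma bi_pt (i j : ℕ) (t : ℝ) (x y : ℝ) :
    bInt α α₁ α₂ i j t (x, y) = bInt α α₁ α₂ i j 0 (Real.exp (α*t)*x, Real.exp (α*t)*y) := by
  have hK : Real.exp (((i:ℝ)+(j:ℝ))*α*t) = Real.exp (α*t)^(i+j) := by
    rw [show ((i:ℝ)+(j:ℝ))*α*t = ((i+j : ℕ):ℝ)*(α*t) by push_cast; ring, Real.exp_nat_mul]
  have hE2 : Real.exp (2*α*t) = Real.exp (α*t)^2 := by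
    rw [show (2:ℝ)*α*t = α*t+α*t by ring, Real.exp_add, sq]
  simp only [bInt, mul_zero, zero_mul, Real.exp_zero, mul_one, one_mul]
  rw [hK, hE2, show Real.exp (α*t)*x + Real.exp (α*t)*y = (x+y)*Real.exp (α*t) by ring,
    show α₁/α*((x+y)*Real.exp (α*t))
        + α₂/(2*α)*((Real.exp (α*t)*x)^2+(Real.exp (α*t)*y)^2)
      = α₁/α*(x+y)*Real.exp (α*t) + α₂/(2*α)*(x^2+y^2)*Real.exp (α*t)^2 by ring]
  ring

lemma bi_scale (hα : α ≠ 0) (hαα₂ : α * α₂ < 0) (i j : ℕ) (t : ℝ) :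
    (∫ p in (Set.Ioi (0:ℝ)) ×ˢ (Set.Ioi (0:ℝ)), bInt α α₁ α₂ i j t p)
      = Real.exp (-(2*α*t)) * ∫ p in (Set.Ioi (0:ℝ)) ×ˢ (Set.Ioi (0:ℝ)), bInt α α₁ α₂ i j 0 p := by
  have hE : (0:ℝ) < Real.exp (α*t) := Real.exp_pos _
  rw [my_prod_int (bi_integrable hα hαα₂ i j t), my_prod_int (bi_integrable hα hαα₂ i j 0)]
  have hin : ∀ x : ℝ, (∫ y in Set.Ioi (0:ℝ), bInt α α₁ α₂ i j t (x, y))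
      = (Real.exp (α*t))⁻¹
        * ∫ v in Set.Ioi (0:ℝ), bInt α α₁ α₂ i j 0 (Real.exp (α*t)*x, v) := by
    intro x
    have h := integral_comp_mul_left_Ioi
      (fun v => bInt α α₁ α₂ i j 0 (Real.exp (α*t)*x, v)) 0 hE
    rw [mul_zero] at h
    simp_rw [bi_pt i j t x]
    simpa [smul_eq_mul] using h
  simp_rw [hin]
  rw [MeasureTheory.integral_const_mul]
  have hout := integral_comp_mul_left_Ioi
    (fun u => ∫ v in Set.Ioi (0:ℝ), bInt α α₁ α₂ i j 0 (u, v)) 0 hE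
  rw [mul_zero] at hout
  have h2 : (∫ x in Set.Ioi (0:ℝ), ∫ v in Set.Ioi (0:ℝ),
        bInt α α₁ α₂ i j 0 (Real.exp (α*t)*x, v))
      = (Real.exp (α*t))⁻¹ * ∫ u in Set.Ioi (0:ℝ), ∫ v in Set.Ioi (0:ℝ),
        bInt α α₁ α₂ i j 0 (u, v) := by
    simpa [smul_eq_mul] using hout
  rw [h2, show Real.exp (-(2*α*t)) = (Real.exp (α*t))⁻¹ * (Real.exp (α*t))⁻¹ by
    rw [show -(2*α*t) = -(α*t) + -(α*t) by ring, Real.exp_add, Real.exp_neg]]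
  ring

lemma bi_stationary (hα : α ≠ 0) (hαα₂ : α * α₂ < 0) (i j : ℕ) (t : ℝ) :
    HasDerivAt (fun u => ∫ p in (Set.Ioi (0:ℝ)) ×ˢ (Set.Ioi (0:ℝ)), bInt α α₁ α₂ i j u p)
      (-2 * α * ∫ p in (Set.Ioi (0:ℝ)) ×ˢ (Set.Ioi (0:ℝ)), bInt α α₁ α₂ i j t p) t := by
  have hfun : (fun u => ∫ p in (Set.Ioi (0:ℝ)) ×ˢ (Set.Ioi (0:ℝ)), bInt α α₁ α₂ i j u p)
      = fun u => Real.exp ((-(2*α))*u)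
        * ∫ p in (Set.Ioi (0:ℝ)) ×ˢ (Set.Ioi (0:ℝ)), bInt α α₁ α₂ i j 0 p := by
    funext u
    rw [bi_scale hα hαα₂ i j u, show -(2*α*u) = (-(2*α))*u by ring]
  rw [hfun, bi_scale hα hαα₂ i j t]
  have h := (((hasDerivAt_id t).const_mul (-(2*α))).exp).mul_const
    (∫ p in (Set.Ioi (0:ℝ)) ×ˢ (Set.Ioi (0:ℝ)), bInt α α₁ α₂ i j 0 p)
  refine h.congr_deriv ?_
  rw [show -(2*α*t) = (-(2*α))*t by ring]
  simp only [id_eq]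
  ring

end


/-- The deformed Cauchy (bi)moments converge, are differentiable, and simultaneously satisfy
the nonisospectral evolutions and the stationarity relations. -/
theorem cauchyMoments_evolution (α α₁ α₂ : ℝ) (hα : α ≠ 0) (hαα₂ : α * α₂ < 0) :
    (∀ (i j : ℕ) (t : ℝ), IntegrableOn
      (fun p : ℝ × ℝ =>
        p.1 ^ i * p.2 ^ j * Real.exp (((i : ℝ) + (j : ℝ)) * α * t)
          / ((p.1 + p.2) * Real.exp (α * t))
          * Real.exp (α₁ / α * (p.1 + p.2) * Real.exp (α * t)
              + α₂ / (2 * α) * (p.1 ^ 2 + p.2 ^ 2) * Real.exp (2 * α * t)))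
      ((Set.Ioi (0 : ℝ)) ×ˢ (Set.Ioi (0 : ℝ)))) ∧
    (∀ (i : ℕ) (t : ℝ), IntegrableOn
      (fun x : ℝ => x ^ i * Real.exp ((i : ℝ) * α * t) *
        Real.exp (α₁ / α * x * Real.exp (α * t)
          + α₂ / (2 * α) * x ^ 2 * Real.exp (2 * α * t)))
      (Set.Ioi (0 : ℝ))) ∧
    (∀ (i j : ℕ) (t : ℝ), HasDerivAt (fun u => cauchyBimoment α α₁ α₂ i j u)
      (α * ((i : ℝ) + (j : ℝ) - 1) * cauchyBimoment α α₁ α₂ i j t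
        + α₁ * (cauchyBimoment α α₁ α₂ (i + 1) j t + cauchyBimoment α α₁ α₂ i (j + 1) t)
        + α₂ * (cauchyBimoment α α₁ α₂ (i + 2) j t + cauchyBimoment α α₁ α₂ i (j + 2) t)) t) ∧
    (∀ (i : ℕ) (t : ℝ), HasDerivAt (fun u => cauchySingleMoment α α₁ α₂ i u)
      ((i : ℝ) * α * cauchySingleMoment α α₁ α₂ i t
        + α₁ * cauchySingleMoment α α₁ α₂ (i + 1) t
        + α₂ * cauchySingleMoment α α₁ α₂ (i + 2) t) t) ∧
    (∀ (i j : ℕ) (t : ℝ), HasDerivAt (fun u => cauchyBimoment α α₁ α₂ i j u)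
      (-2 * α * cauchyBimoment α α₁ α₂ i j t) t) ∧
    (∀ (i : ℕ) (t : ℝ), HasDerivAt (fun u => cauchySingleMoment α α₁ α₂ i u)
      (-α * cauchySingleMoment α α₁ α₂ i t) t) := by
  refine ⟨fun i j t => bi_integrable hα hαα₂ i j t,
    fun i t => single_integrable hα hαα₂ i t,
    fun i j t => bi_evolution hα hαα₂ i j t,
    fun i t => single_evolution hα hαα₂ i t,
    fun i j t => bi_stationary hα hαα₂ i j t,
    fun i t => single_stationary hα hαα₂ i t⟩
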